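/- Let m ≥ 1, g ≥ 1 and n be integers with n > g·m. Then the flip graph on the g-spread m-element subsets of ZMod n is connected: any g-spread m-subset can be transformed into any other by a sequence of moves, each replacing a single element a by a+1 or a−1 while preserving the g-spread condition. (This expresses that the complex Φ_{m,n,g} is connected whenever n > gm.) -/

import Mathlib

/-- The cyclic distance between two elements of `ZMod n`:
`dist(a,b) = min((a−b).val, (b−a).val)`. -/
def cycDist {n : ℕ} (a b : ZMod n) : ℕ := min (a - b).val (b - a).val

/-- Adjacency in the flip graph: `S'` is obtained from `S` by replacing exactly
one element `a ∈ S` with `a + 1` or `a − 1`. -/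
def flipAdj {n : ℕ} (S S' : Finset (ZMod n)) : Prop :=
  S ≠ S' ∧ ∃ a ∈ S, S' = insert (a + 1) (S.erase a) ∨ S' = insert (a - 1) (S.erase a)

namespace FlipAux

/-- A `g`-spread `m`-element subset of `ZMod n`. -/
def Spread (m g n : ℕ) (S : Finset (ZMod n)) : Prop :=
  S.card = m ∧ ∀ a ∈ S, ∀ b ∈ S, a ≠ b → g ≤ cycDist a b

/-- An integer configuration representing a spread set. -/
def Good (m g n : ℕ) (c : Fin m → ℕ) : Prop :=
  ∀ i j : Fin m, i < j → c i + g ≤ c j ∧ c j + g ≤ c i + n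

/-- The subset of `ZMod n` represented by a configuration. -/
def toSet (n : ℕ) {m : ℕ} (c : Fin m → ℕ) : Finset (ZMod n) :=
  Finset.image (fun i => ((c i : ZMod n))) Finset.univ

/-- The canonical configuration anchored at `v`. -/
def Kc (g v : ℕ) {m : ℕ} : Fin m → ℕ := fun i => v + i.val * g

variable {m g n : ℕ}

lemma good_sub_vals [NeZero n] (hg : 1 ≤ g) {c : Fin m → ℕ} (hc : Good m g n c)
    {i j : Fin m} (hij : i < j) :
    ((c j : ZMod n) - (c i : ZMod n)).val = c j - c i ∧
    ((c i : ZMod n) - (c j : ZMod n)).val = n - (c j - c i) := by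
  obtain ⟨h1, h2⟩ := hc i j hij
  have hle : c i ≤ c j := by omega
  have hlt : c j - c i < n := by omega
  have e1 : ((c j : ZMod n) - (c i : ZMod n)).val = c j - c i := by
    rw [← Nat.cast_sub hle, ZMod.val_natCast, Nat.mod_eq_of_lt hlt]
  refine ⟨e1, ?_⟩
  have hne : ((c j : ZMod n) - (c i : ZMod n)) ≠ 0 := by
    intro h0
    rw [h0, ZMod.val_zero] at e1
    omega
  have hneg : (c i : ZMod n) - (c j : ZMod n) = -(((c j : ZMod n) - (c i : ZMod n))) := by ring
  rw [hneg, ZMod.neg_val, if_neg hne, e1]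

lemma good_inj [NeZero n] (hg : 1 ≤ g) {c : Fin m → ℕ} (hc : Good m g n c) :
    Function.Injective (fun i : Fin m => ((c i : ZMod n))) := by
  intro i j hij
  by_contra hne
  rcases Ne.lt_or_gt hne with h | h
  · have e1 := (good_sub_vals hg hc h).1
    have h1 := (hc i j h).1
    simp only at hij
    rw [hij, sub_self, ZMod.val_zero] at e1
    omega
  · have e1 := (good_sub_vals hg hc h).1
    have h1 := (hc j i h).1
    simp only at hij
    rw [hij, sub_self, ZMod.val_zero] at e1
    omega

lemma good_spread [NeZero n] (hg : 1 ≤ g) {c : Fin m → ℕ} (hc : Good m g n c) :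
    Spread m g n (toSet n c) := by
  constructor
  · rw [toSet, Finset.card_image_of_injective _ (good_inj hg hc), Finset.card_univ,
      Fintype.card_fin]
  · intro a ha b hb hab
    obtain ⟨i, -, rfl⟩ := Finset.mem_image.mp ha
    obtain ⟨j, -, rfl⟩ := Finset.mem_image.mp hb
    have hij : i ≠ j := fun h => hab (by rw [h])
    rcases hij.lt_or_gt with h | h
    · obtain ⟨e1, e2⟩ := good_sub_vals hg hc h
      have := hc i j h
      unfold cycDist
      rw [e1, e2]
      omega
    · obtain ⟨e1, e2⟩ := good_sub_vals hg hc h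
      have := hc j i h
      unfold cycDist
      rw [e1, e2]
      omega

lemma move_step [NeZero n] (h2 : 2 ≤ n) (hg : 1 ≤ g) {c c' : Fin m → ℕ}
    (hc : Good m g n c) (k : Fin m) (hk1 : 1 ≤ c k)
    (hup : c' = Function.update c k (c k - 1)) :
    flipAdj (toSet n c) (toSet n c') := by
  have hcast : ((c' k : ℕ) : ZMod n) = (c k : ZMod n) - 1 := by
    rw [hup, Function.update_self, Nat.cast_sub hk1, Nat.cast_one]
  have hmem : ((c k : ℕ) : ZMod n) ∈ toSet n c :=
    Finset.mem_image.mpr ⟨k, Finset.mem_univ _, rfl⟩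
  have hset : toSet n c' = insert ((c k : ZMod n) - 1) ((toSet n c).erase (c k : ZMod n)) := by
    ext x
    simp only [toSet, Finset.mem_insert, Finset.mem_erase, Finset.mem_image, Finset.mem_univ,
      true_and]
    constructor
    · rintro ⟨i, rfl⟩
      by_cases hik : i = k
      · subst hik; exact Or.inl hcast
      · refine Or.inr ⟨?_, ⟨i, ?_⟩⟩
        · rw [hup, Function.update_of_ne hik]
          intro hcc
          exact hik (good_inj hg hc hcc)
        · rw [hup, Function.update_of_ne hik]
    · rintro (rfl | ⟨hxne, i, rfl⟩)
      · exact ⟨k, hcast⟩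
      · have hik : i ≠ k := fun h => hxne (by rw [h])
        exact ⟨i, by rw [hup, Function.update_of_ne hik]⟩
  have hnm : ((c k : ℕ) : ZMod n) ∉ toSet n c' := by
    rw [hset]
    simp only [Finset.mem_insert, Finset.mem_erase]
    rintro (h | ⟨h, -⟩)
    · have h1 : (1 : ZMod n) = 0 := sub_eq_self.mp h.symm
      have := congrArg ZMod.val h1
      rw [ZMod.val_one_eq_one_mod, ZMod.val_zero, Nat.mod_eq_of_lt (by omega : 1 < n)] at this
      omega
    · exact h rfl
  refine ⟨fun he => hnm (he ▸ hmem), (c k : ZMod n), hmem, Or.inr hset⟩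

lemma good_lower [NeZero m] {c : Fin m → ℕ} (hc : Good m g n c) (i : Fin m) :
    c 0 + i.val * g ≤ c i := by
  suffices H : ∀ iv (hiv : iv < m), c 0 + iv * g ≤ c ⟨iv, hiv⟩ by
    have := H i.val i.isLt
    simpa using this
  intro iv
  induction iv with
  | zero =>
    intro h0m
    have h0 : (⟨0, h0m⟩ : Fin m) = 0 := by ext; simp
    rw [h0]; simp
  | succ iv IHiv =>
    intro hiv
    have h1 : iv < m := Nat.lt_of_succ_lt hiv
    have h2 := (hc ⟨iv, h1⟩ ⟨iv + 1, hiv⟩ (by simp)).1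
    have h3 := IHiv h1
    obtain ⟨A, hA⟩ : ∃ t, iv * g = t := ⟨_, rfl⟩
    rw [Nat.succ_mul, hA]
    rw [hA] at h3
    omega

lemma phase1 [NeZero m] [NeZero n] (hg : 1 ≤ g) (h2 : 2 ≤ n)
    (R : Finset (ZMod n) → Finset (ZMod n) → Prop)
    (hR : ∀ A B, Spread m g n A → Spread m g n B → flipAdj A B → R A B) :
    ∀ N (c : Fin m → ℕ), Good m g n c →
      (∑ i : Fin m, (c i - (c 0 + i.val * g))) = N →
      Relation.ReflTransGen R (toSet n c) (toSet n (Kc g (c 0) : Fin m → ℕ)) := by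
  intro N
  induction N using Nat.strong_induction_on with
  | _ N IH =>
  intro c hc hsum
  by_cases hall : ∀ i : Fin m, c i = c 0 + i.val * g
  · have hceq : (fun i : Fin m => ((c i : ZMod n))) = fun i => ((Kc g (c 0) i : ZMod n)) := by
      funext i; rw [hall i]; rfl
    have : toSet n c = toSet n (Kc g (c 0) : Fin m → ℕ) := by
      unfold toSet; rw [hceq]
    rw [this]
  · push_neg at hall
    obtain ⟨i0, hi0⟩ := hall
    have hlow := good_lower (g := g) (n := n) hc
    obtain ⟨k, hk, hmin⟩ : ∃ k : Fin m, (c 0 + k.val * g < c k) ∧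
        ∀ j : Fin m, j < k → c j = c 0 + j.val * g := by
      have hTne : ((Finset.univ : Finset (Fin m)).filter
          (fun i => c 0 + i.val * g < c i)).Nonempty :=
        ⟨i0, Finset.mem_filter.mpr ⟨Finset.mem_univ _, lt_of_le_of_ne (hlow i0) (Ne.symm hi0)⟩⟩
      refine ⟨Finset.min' _ hTne, (Finset.mem_filter.mp (Finset.min'_mem _ hTne)).2, ?_⟩
      intro j hj
      by_contra hne
      have hjT : j ∈ Finset.filter (fun i : Fin m => c 0 + i.val * g < c i) Finset.univ :=
        Finset.mem_filter.mpr ⟨Finset.mem_univ _, lt_of_le_of_ne (hlow j) (Ne.symm hne)⟩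
      exact absurd (Finset.min'_le _ _ hjT) (not_le.mpr hj)
    have hkne0 : k ≠ 0 := by
      intro h
      rw [h] at hk
      simp at hk
    have hkv : 0 < k.val := Nat.pos_of_ne_zero (fun h => hkne0 (Fin.ext (by simp [h])))
    have hk0lt : (0 : Fin m) < k := by
      rw [Fin.lt_def]; simpa using hkv
    have hck1 : 1 ≤ c k := Nat.lt_of_le_of_lt (Nat.zero_le _) hk
    have hkg1 : g ≤ k.val * g := by
      have := Nat.mul_le_mul_right g hkv
      simpa using this
    set c' := Function.update c k (c k - 1) with hc'def
    have hvk : c' k = c k - 1 := by rw [hc'def]; exact Function.update_self _ _ _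
    have hv : ∀ i : Fin m, i ≠ k → c' i = c i := by
      intro i h; rw [hc'def]; exact Function.update_of_ne h _ _
    have h0k : c' 0 = c 0 := hv 0 (ne_of_lt hk0lt)
    have hgood' : Good m g n c' := by
      intro i j hij
      by_cases hjk : j = k
      · subst hjk
        rw [hv i (ne_of_lt hij), hvk]
        have hi := hmin i hij
        have h2w := (hc i j hij).2
        have hmul : i.val * g + g ≤ j.val * g := by
          have := Nat.mul_le_mul_right g (show i.val + 1 ≤ j.val from hij)
          rwa [Nat.succ_mul] at this
        obtain ⟨A, hA⟩ : ∃ t, i.val * g = t := ⟨_, rfl⟩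
        obtain ⟨B, hB⟩ : ∃ t, j.val * g = t := ⟨_, rfl⟩
        rw [hA, hB] at hmul
        rw [hA] at hi
        rw [hB] at hk
        omega
      · by_cases hik : i = k
        · subst hik
          rw [hvk, hv j hjk]
          have h1w := (hc i j hij).1
          have h0j := (hc 0 j (lt_trans hk0lt hij)).2
          obtain ⟨B, hB⟩ : ∃ t, i.val * g = t := ⟨_, rfl⟩
          rw [hB] at hk hkg1
          omega
        · rw [hv i hik, hv j hjk]
          exact hc i j hij
    have hdiff : ∑ i ∈ Finset.univ \ {k}, (c' i - (c' 0 + i.val * g)) =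
        ∑ i ∈ Finset.univ \ {k}, (c i - (c 0 + i.val * g)) := by
      refine Finset.sum_congr rfl (fun i hi => ?_)
      have hik : i ≠ k := by
        simp only [Finset.mem_sdiff, Finset.mem_singleton] at hi
        exact hi.2
      rw [hv i hik, h0k]
    have e1 := Finset.sum_eq_sum_sdiff_singleton_add (Finset.mem_univ k)
      (fun i : Fin m => c' i - (c' 0 + i.val * g))
    have e2 := Finset.sum_eq_sum_sdiff_singleton_add (Finset.mem_univ k)
      (fun i : Fin m => c i - (c 0 + i.val * g))
    rw [hdiff] at e1
    have hfk : c' k - (c' 0 + k.val * g) = (c k - (c 0 + k.val * g)) - 1 ∧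
        1 ≤ c k - (c 0 + k.val * g) := by
      rw [hvk, h0k]
      obtain ⟨B, hB⟩ : ∃ t, k.val * g = t := ⟨_, rfl⟩
      rw [hB]
      rw [hB] at hk
      omega
    obtain ⟨B, hB⟩ : ∃ t, k.val * g = t := ⟨_, rfl⟩
    rw [hB] at e1 e2 hfk
    have hNsum : ∑ i : Fin m, (c' i - (c' 0 + i.val * g)) = N - 1 := by
      rw [← hsum]
      omega
    have hN1 : 1 ≤ N := by
      rw [← hsum]
      omega
    have hstep : R (toSet n c) (toSet n c') :=
      hR _ _ (good_spread hg hc) (good_spread hg hgood')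
        (move_step h2 hg hc k hck1 hc'def)
    have htail := IH (N - 1) (by omega) c' hgood' hNsum
    rw [h0k] at htail
    exact Relation.ReflTransGen.head hstep htail

lemma rotate_down [NeZero m] [NeZero n] (hg : 1 ≤ g) (hn : g * m < n) (h2 : 2 ≤ n)
    (R : Finset (ZMod n) → Finset (ZMod n) → Prop)
    (hR : ∀ A B, Spread m g n A → Spread m g n B → flipAdj A B → R A B) (v : ℕ) :
    Relation.ReflTransGen R (toSet n (Kc g (v + 1) : Fin m → ℕ)) (toSet n (Kc g v : Fin m → ℕ)) := by
  classical
  set d : ℕ → Fin m → ℕ := fun K i => if i.val < K then v + i.val * g else (v + 1) + i.val * g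
    with hd
  have hgoodd : ∀ K, Good m g n (d K) := by
    intro K i j hij
    have hijv : i.val < j.val := hij
    have hmul : i.val * g + g ≤ j.val * g := by
      rw [← Nat.succ_mul]; exact Nat.mul_le_mul_right g hijv
    have hjm : j.val * g + g ≤ m * g := by
      rw [← Nat.succ_mul]; exact Nat.mul_le_mul_right g j.isLt
    have hmn : m * g < n := by rwa [Nat.mul_comm] at hn
    simp only [hd]
    obtain ⟨A, hA⟩ : ∃ t, i.val * g = t := ⟨_, rfl⟩
    obtain ⟨B, hB⟩ : ∃ t, j.val * g = t := ⟨_, rfl⟩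
    obtain ⟨C, hC⟩ : ∃ t, m * g = t := ⟨_, rfl⟩
    rw [hA, hB] at hmul
    rw [hB, hC] at hjm
    rw [hC] at hmn
    rw [hA, hB]
    split_ifs <;> omega
  have hstep : ∀ K, K < m → R (toSet n (d K)) (toSet n (d (K + 1))) := by
    intro K hK
    have hupd : d (K + 1) = Function.update (d K) ⟨K, hK⟩ (d K ⟨K, hK⟩ - 1) := by
      funext i
      by_cases hik : i = ⟨K, hK⟩
      · subst hik
        rw [Function.update_self]
        simp only [hd]
        rw [if_pos (by omega), if_neg (lt_irrefl K)]
        omega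
      · have hik' : i.val ≠ K := fun h => hik (Fin.ext h)
        rw [Function.update_of_ne hik]
        simp only [hd]
        by_cases h2' : i.val < K
        · rw [if_pos (by omega), if_pos h2']
        · rw [if_neg (by omega), if_neg h2']
    refine hR _ _ (good_spread hg (hgoodd K)) (good_spread hg (hgoodd (K + 1)))
      (move_step h2 hg (hgoodd K) ⟨K, hK⟩ ?_ hupd)
    simp only [hd]
    rw [if_neg (lt_irrefl K)]
    omega
  have hchain : ∀ K, K ≤ m → Relation.ReflTransGen R (toSet n (d 0)) (toSet n (d K)) := by
    intro K
    induction K with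
    | zero => intro _; exact Relation.ReflTransGen.refl
    | succ K IHK =>
      intro hK
      exact (IHK (Nat.le_of_succ_le hK)).tail (hstep K hK)
  have h0 : d 0 = (Kc g (v + 1) : Fin m → ℕ) := by
    funext i; simp [hd, Kc]
  have hm' : d m = (Kc g v : Fin m → ℕ) := by
    funext i; simp [hd, Kc, i.isLt]
  have := hchain m le_rfl
  rwa [h0, hm'] at this

lemma to_zero [NeZero m] [NeZero n] (hg : 1 ≤ g) (hn : g * m < n) (h2 : 2 ≤ n)
    (R : Finset (ZMod n) → Finset (ZMod n) → Prop)
    (hR : ∀ A B, Spread m g n A → Spread m g n B → flipAdj A B → R A B) (v : ℕ) :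
    Relation.ReflTransGen R (toSet n (Kc g v : Fin m → ℕ)) (toSet n (Kc g 0 : Fin m → ℕ)) := by
  induction v with
  | zero => exact Relation.ReflTransGen.refl
  | succ v IHv => exact (rotate_down hg hn h2 R hR v).trans IHv

lemma represent [NeZero n] (hg : 1 ≤ g) {S : Finset (ZMod n)} (hS : Spread m g n S) :
    ∃ c : Fin m → ℕ, Good m g n c ∧ toSet n c = S := by
  have hcard : (S.image ZMod.val).card = m := by
    rw [Finset.card_image_of_injective S (ZMod.val_injective n), hS.1]
  set e := (S.image ZMod.val).orderIsoOfFin hcard with he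
  have hmem : ∀ i : Fin m, (((e i : ℕ) : ZMod n)) ∈ S := by
    intro i
    obtain ⟨a, haS, hav⟩ := Finset.mem_image.mp (e i).2
    rw [← hav, ZMod.natCast_rightInverse a]
    exact haS
  have hlt : ∀ i : Fin m, (e i : ℕ) < n := by
    intro i
    obtain ⟨a, haS, hav⟩ := Finset.mem_image.mp (e i).2
    rw [← hav]; exact ZMod.val_lt a
  have hmono : ∀ {i j : Fin m}, i < j → (e i : ℕ) < (e j : ℕ) := by
    intro i j hij
    exact e.strictMono hij
  have hval : ∀ i : Fin m, (((e i : ℕ) : ZMod n)).val = (e i : ℕ) := fun i => by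
    rw [ZMod.val_natCast, Nat.mod_eq_of_lt (hlt i)]
  have hgood : Good m g n (fun i => (e i : ℕ)) := by
    intro i j hij
    have h1 := hmono hij
    have hab : (((e i : ℕ) : ZMod n)) ≠ (((e j : ℕ) : ZMod n)) := by
      intro h
      have := congrArg ZMod.val h
      rw [hval i, hval j] at this
      omega
    have hcd := hS.2 _ (hmem i) _ (hmem j) hab
    unfold cycDist at hcd
    have hd1 : ((((e j : ℕ) : ZMod n)) - (((e i : ℕ) : ZMod n))).val = (e j : ℕ) - (e i : ℕ) := by
      rw [← Nat.cast_sub (le_of_lt h1), ZMod.val_natCast,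
        Nat.mod_eq_of_lt (by have := hlt j; omega)]
    have hne0 : ((((e j : ℕ) : ZMod n)) - (((e i : ℕ) : ZMod n))) ≠ 0 := by
      intro h
      rw [h, ZMod.val_zero] at hd1
      omega
    have hd2 : ((((e i : ℕ) : ZMod n)) - (((e j : ℕ) : ZMod n))).val
        = n - ((e j : ℕ) - (e i : ℕ)) := by
      rw [show (((e i : ℕ) : ZMod n)) - (((e j : ℕ) : ZMod n))
          = -((((e j : ℕ) : ZMod n)) - (((e i : ℕ) : ZMod n))) by ring,
        ZMod.neg_val, if_neg hne0, hd1]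
    rw [hd1, hd2] at hcd
    have := hlt j
    show (e i : ℕ) + g ≤ (e j : ℕ) ∧ (e j : ℕ) + g ≤ (e i : ℕ) + n
    constructor <;> omega
  refine ⟨_, hgood, ?_⟩
  apply Finset.eq_of_subset_of_card_le
  · intro x hx
    obtain ⟨i, -, rfl⟩ := Finset.mem_image.mp hx
    exact hmem i
  · rw [hS.1, (good_spread hg hgood).1]

lemma flip_symm (hm : 1 ≤ m) {A B : Finset (ZMod n)} (hA : Spread m g n A)
    (hB : Spread m g n B) (h : flipAdj A B) : flipAdj B A := by
  obtain ⟨hne, a, ha, hcase⟩ := h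
  rcases hcase with hBdef | hBdef
  · have hnot : a + 1 ∉ A.erase a := by
      intro hmemx
      have h1 : B = A.erase a := by rw [hBdef, Finset.insert_eq_self.mpr hmemx]
      have h2 : B.card = A.card - 1 := by rw [h1, Finset.card_erase_of_mem ha]
      rw [hA.1, hB.1] at h2
      omega
    refine ⟨hne.symm, a + 1, by rw [hBdef]; exact Finset.mem_insert_self _ _, Or.inr ?_⟩
    rw [hBdef, Finset.erase_insert hnot, add_sub_cancel_right, Finset.insert_erase ha]
  · have hnot : a - 1 ∉ A.erase a := by
      intro hmemx
      have h1 : B = A.erase a := by rw [hBdef, Finset.insert_eq_self.mpr hmemx]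
      have h2 : B.card = A.card - 1 := by rw [h1, Finset.card_erase_of_mem ha]
      rw [hA.1, hB.1] at h2
      omega
    refine ⟨hne.symm, a - 1, by rw [hBdef]; exact Finset.mem_insert_self _ _, Or.inl ?_⟩
    rw [hBdef, Finset.erase_insert hnot, sub_add_cancel, Finset.insert_erase ha]

end FlipAux

open FlipAux in
/-- **`Φ_{m,n,g}` is connected whenever `n > gm`.** For `m, g ≥ 1` and
`n > g·m`, any `g`-spread `m`-element subset of `ZMod n` can be transformed
into any other by a sequence of single-element moves `a ↦ a ± 1`, each
preserving the `g`-spread condition. -/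
theorem cohomology_of_colorings_of_cycles_stmt18
    (m g n : ℕ) (hm : 1 ≤ m) (hg : 1 ≤ g) (hn : g * m < n) :
    ∀ S S' : Finset (ZMod n),
      (S.card = m ∧ ∀ a ∈ S, ∀ b ∈ S, a ≠ b → g ≤ cycDist a b) →
      (S'.card = m ∧ ∀ a ∈ S', ∀ b ∈ S', a ≠ b → g ≤ cycDist a b) →
      Relation.ReflTransGen (fun A B : Finset (ZMod n) =>
        (A.card = m ∧ ∀ a ∈ A, ∀ b ∈ A, a ≠ b → g ≤ cycDist a b) ∧
        (B.card = m ∧ ∀ a ∈ B, ∀ b ∈ B, a ≠ b → g ≤ cycDist a b) ∧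
        flipAdj A B) S S' := by
  intro S S' hS hS'
  have hgm : 1 ≤ g * m := le_trans (by norm_num) (Nat.mul_le_mul hg hm)
  have h2 : 2 ≤ n := by omega
  haveI : NeZero n := ⟨by omega⟩
  haveI : NeZero m := ⟨by omega⟩
  set R := (fun A B : Finset (ZMod n) =>
        (A.card = m ∧ ∀ a ∈ A, ∀ b ∈ A, a ≠ b → g ≤ cycDist a b) ∧
        (B.card = m ∧ ∀ a ∈ B, ∀ b ∈ B, a ≠ b → g ≤ cycDist a b) ∧
        flipAdj A B) with hRdef
  have hR : ∀ A B : Finset (ZMod n), Spread m g n A → Spread m g n B → flipAdj A B → R A B :=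
    fun A B h1 h2 h3 => ⟨h1, h2, h3⟩
  have hSs : Spread m g n S := hS
  have hSs' : Spread m g n S' := hS'
  obtain ⟨c, hc, hcS⟩ := represent hg hSs
  obtain ⟨c', hc', hcS'⟩ := represent hg hSs'
  have hpath : ∀ (T : Finset (ZMod n)) (d : Fin m → ℕ), Good m g n d → toSet n d = T →
      Relation.ReflTransGen R T (toSet n (Kc g 0 : Fin m → ℕ)) := by
    rintro T d hd rfl
    exact (phase1 hg h2 R hR _ d hd rfl).trans (to_zero hg hn h2 R hR (d 0))
  have h1 := hpath S c hc hcS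
  have h2' := hpath S' c' hc' hcS'
  have hsymmR : Symmetric R := by
    rintro A B ⟨hA, hB, hAB⟩
    exact ⟨hB, hA, flip_symm hm hA hB hAB⟩
  exact h1.trans (by haveI : Std.Symm R := ⟨hsymmR⟩; exact Relation.ReflTransGen.symmetric.symm _ _ h2')
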